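/- In the Majority cross-validation model with n, k, m, P, L̂_i as in the context, the covariance between the first two fold losses admits the exact combinatorial form: E[L̂₁·L̂₂] − E[L̂₁]·E[L̂₂] = 2^{−n} · Σ_{j=0}^{m−1} (binom(m−1, j))² · binom(n−2m, ⌊(n−m)/2⌋ − j). -/

import Mathlib

open Finset

/-- Fold `i` (for `1 ≤ i ≤ k`) consists of the indices `{(i-1)·m, …, i·m - 1}`. -/
def cvFold (n m i : ℕ) : Finset (Fin n) :=
  Finset.univ.filter fun j => (i - 1) * m ≤ (j : ℕ) ∧ (j : ℕ) < i * m

/-- `X_i(ω)`: number of 1-labels inside cvFold `i`. -/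
def Xc (n m i : ℕ) (ω : Fin n → Bool) : ℕ :=
  ((cvFold n m i).filter fun j => ω j = true).card

/-- `Y_{-i}(ω)`: number of 1-labels outside cvFold `i`. -/
def Yc (n m i : ℕ) (ω : Fin n → Bool) : ℕ :=
  ((Finset.univ \ cvFold n m i).filter fun j => ω j = true).card

/-- Hold-out error on cvFold `i` of the Majority algorithm trained on the complement of
cvFold `i`: it predicts the constant label `1` iff `Y_{-i} > (n-m)/2`, so the hold-out
error is `(X_i/m)·1{Y_{-i} ≤ (n-m)/2} + ((m-X_i)/m)·1{Y_{-i} > (n-m)/2}`. -/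
noncomputable def Lhat (n m i : ℕ) (ω : Fin n → Bool) : ℝ :=
  if ((n : ℝ) - m) / 2 < (Yc n m i ω : ℝ) then ((m : ℝ) - Xc n m i ω) / m
  else (Xc n m i ω : ℝ) / m

/-- Expectation with respect to the uniform probability measure on `Fin n → Bool`
(i.e. `n` i.i.d. fair-coin binary labels). -/
noncomputable def expec (n : ℕ) (f : (Fin n → Bool) → ℝ) : ℝ :=
  (∑ ω : Fin n → Bool, f ω) / 2 ^ n

/-- Binomial coefficient with an integer lower index, with the convention that it
vanishes for negative lower index (and, via `Nat.choose`, above the upper index). -/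
def ibinom (a : ℕ) (b : ℤ) : ℕ := if 0 ≤ b then a.choose b.toNat else 0


lemma sum_boolfun {α : Type*} [Fintype α] [DecidableEq α] (f : (α → Bool) → ℝ) :
    ∑ ω : α → Bool, f ω = ∑ A : Finset α, f (fun i => decide (i ∈ A)) := by
  refine (Fintype.sum_bijective (fun A : Finset α => fun i => decide (i ∈ A)) ⟨?_, ?_⟩ _ _
    (fun A => rfl)).symm
  · intro A B h
    ext i
    have := congrFun h i
    simpa using this
  · intro ω
    refine ⟨univ.filter fun i => ω i = true, ?_⟩
    funext i
    cases h : ω i <;> simp [h]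

lemma sum_powerset_disjUnion {α : Type*} [DecidableEq α] {u v : Finset α} (huv : Disjoint u v)
    (G : Finset α → Finset α → ℝ) :
    ∑ A ∈ (u ∪ v).powerset, G (A ∩ u) (A ∩ v)
      = ∑ B ∈ u.powerset, ∑ C ∈ v.powerset, G B C := by
  rw [← Finset.sum_product']
  refine Finset.sum_nbij' (fun A => (A ∩ u, A ∩ v)) (fun p => p.1 ∪ p.2) ?_ ?_ ?_ ?_ ?_
  · intro A hA
    simp only [Finset.mem_product, Finset.mem_powerset]
    exact ⟨inter_subset_right, inter_subset_right⟩
  · intro p hp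
    simp only [Finset.mem_product, Finset.mem_powerset] at hp ⊢
    exact union_subset (hp.1.trans subset_union_left) (hp.2.trans subset_union_right)
  · intro A hA
    simp only [Finset.mem_powerset] at hA
    show (A ∩ u) ∪ (A ∩ v) = A
    rw [← Finset.inter_union_distrib_left, Finset.inter_eq_left.mpr hA]
  · intro p hp
    simp only [Finset.mem_product, Finset.mem_powerset] at hp
    have h1 : p.1 ∩ u = p.1 := Finset.inter_eq_left.mpr hp.1
    have h2 : p.2 ∩ v = p.2 := Finset.inter_eq_left.mpr hp.2
    have h12 : p.2 ∩ u = ∅ := Finset.disjoint_iff_inter_eq_empty.mp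
      (Finset.disjoint_of_subset_left hp.2 huv.symm)
    have h21 : p.1 ∩ v = ∅ := Finset.disjoint_iff_inter_eq_empty.mp
      (Finset.disjoint_of_subset_left hp.1 huv)
    show ((p.1 ∪ p.2) ∩ u, (p.1 ∪ p.2) ∩ v) = p
    rw [Finset.union_inter_distrib_right, Finset.union_inter_distrib_right,
      h1, h2, h12, h21, union_empty, empty_union]
  · intro A hA
    rfl

lemma sum_powerset_card {α : Type*} (u : Finset α) (N : ℕ) (hN : u.card = N) (h : ℕ → ℝ) :
    ∑ B ∈ u.powerset, h B.card = ∑ a ∈ range (N + 1), (N.choose a : ℝ) * h a := by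
  subst hN
  rw [Finset.sum_powerset_apply_card]
  simp [nsmul_eq_mul]

lemma card_filter_ico (n a b : ℕ) (hb : b ≤ n) :
    (univ.filter fun j : Fin n => a ≤ (j : ℕ) ∧ (j : ℕ) < b).card = b - a := by
  rw [← Nat.card_Ico a b]
  refine Finset.card_nbij (fun j => (j : ℕ)) ?_ ?_ ?_
  · intro j hj
    simp only [Finset.mem_coe, mem_filter, mem_univ, true_and] at hj
    simpa [Finset.mem_Ico] using hj
  · intro x _ y _ h
    exact Fin.val_injective h
  · intro x hx
    simp only [Finset.coe_Ico, Set.mem_Ico] at hx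
    refine ⟨⟨x, lt_of_lt_of_le hx.2 hb⟩, ?_, rfl⟩
    simp [hx.1, hx.2]

section Folds
variable (n m : ℕ)

lemma filter_decide_mem {α : Type*} [DecidableEq α] (t A : Finset α) :
    (t.filter fun j => decide (j ∈ A) = true) = A ∩ t := by
  ext j
  simp [Finset.mem_filter, Finset.mem_inter, and_comm]

lemma card_fold1 (h2m : 2*m ≤ n) : (cvFold n m 1).card = m := by
  have h := card_filter_ico n ((1-1)*m) (1*m) (by omega)
  rw [cvFold, h]
  omega

lemma card_fold2 (h2m : 2*m ≤ n) : (cvFold n m 2).card = m := by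
  have h := card_filter_ico n ((2-1)*m) (2*m) (by omega)
  rw [cvFold, h]
  omega

lemma disj_folds : Disjoint (cvFold n m 1) (cvFold n m 2) := by
  rw [Finset.disjoint_left]
  intro j hj hj2
  simp only [cvFold, mem_filter, mem_univ, true_and] at hj hj2
  omega

lemma disj_rest : Disjoint (cvFold n m 1 ∪ cvFold n m 2)
    (univ \ (cvFold n m 1 ∪ cvFold n m 2)) := Finset.disjoint_sdiff

lemma card_rest (h2m : 2*m ≤ n) :
    (univ \ (cvFold n m 1 ∪ cvFold n m 2)).card = n - 2*m := by
  rw [Finset.card_sdiff_of_subset (subset_univ _), Finset.card_union_of_disjoint (disj_folds n m),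
    card_fold1 n m h2m, card_fold2 n m h2m, Finset.card_univ, Fintype.card_fin]
  omega

lemma compl_fold1 : univ \ cvFold n m 1
    = cvFold n m 2 ∪ (univ \ (cvFold n m 1 ∪ cvFold n m 2)) := by
  ext j
  simp only [cvFold, mem_sdiff, mem_union, mem_filter, mem_univ, true_and]
  omega

lemma compl_fold2 : univ \ cvFold n m 2
    = cvFold n m 1 ∪ (univ \ (cvFold n m 1 ∪ cvFold n m 2)) := by
  ext j
  simp only [cvFold, mem_sdiff, mem_union, mem_filter, mem_univ, true_and]
  omega

lemma univ_eq_folds : (univ : Finset (Fin n))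
    = cvFold n m 1 ∪ (cvFold n m 2 ∪ (univ \ (cvFold n m 1 ∪ cvFold n m 2))) := by
  rw [← Finset.union_assoc]
  rw [Finset.union_sdiff_of_subset (subset_univ _)]

end Folds

set_option maxHeartbeats 1000000 in
lemma expec_reduce (n m : ℕ) (h2m : 2*m ≤ n) (g : ℕ → ℕ → ℕ → ℝ)
    (f : (Fin n → Bool) → ℝ)
    (hf : ∀ ω, f ω = g (Xc n m 1 ω) (Xc n m 2 ω)
      (((univ \ (cvFold n m 1 ∪ cvFold n m 2)).filter fun j => ω j = true).card)) :
    ∑ ω : Fin n → Bool, f ω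
      = ∑ a ∈ range (m+1), (m.choose a : ℝ) *
          ∑ b ∈ range (m+1), (m.choose b : ℝ) *
            ∑ c ∈ range (n - 2*m + 1), ((n - 2*m).choose c : ℝ) * g a b c := by
  set s1 := cvFold n m 1 with hs1
  set s2 := cvFold n m 2 with hs2
  set rst := univ \ (s1 ∪ s2) with hrst
  have hd12 : Disjoint s1 s2 := disj_folds n m
  have hd1r : Disjoint s1 rst := by
    refine Finset.disjoint_of_subset_left subset_union_left (disj_rest n m)
  have hd2r : Disjoint s2 rst := by
    refine Finset.disjoint_of_subset_left subset_union_right (disj_rest n m)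
  have key : ∀ A : Finset (Fin n), f (fun i => decide (i ∈ A))
      = g (A ∩ s1).card (A ∩ s2).card (A ∩ rst).card := by
    intro A
    rw [hf]
    simp only [Xc, filter_decide_mem]
    rfl
  rw [sum_boolfun]
  have e2 : ∀ A : Finset (Fin n), A ∩ (s2 ∪ rst) ∩ s2 = A ∩ s2 := by
    intro A
    rw [Finset.inter_assoc, Finset.union_inter_cancel_left]
  have e3 : ∀ A : Finset (Fin n), A ∩ (s2 ∪ rst) ∩ rst = A ∩ rst := by
    intro A
    rw [Finset.inter_assoc, Finset.union_inter_cancel_right]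
  calc ∑ A : Finset (Fin n), f (fun i => decide (i ∈ A))
      = ∑ A ∈ (s1 ∪ (s2 ∪ rst)).powerset,
          g (A ∩ s1).card (A ∩ (s2 ∪ rst) ∩ s2).card (A ∩ (s2 ∪ rst) ∩ rst).card := by
        rw [show s1 ∪ (s2 ∪ rst) = univ from (univ_eq_folds n m).symm,
          Finset.powerset_univ]
        exact Finset.sum_congr rfl fun A _ => by rw [key A, e2, e3]
    _ = ∑ B ∈ s1.powerset, ∑ C ∈ (s2 ∪ rst).powerset,
          g B.card (C ∩ s2).card (C ∩ rst).card := by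
        exact sum_powerset_disjUnion (Finset.disjoint_union_right.mpr ⟨hd12, hd1r⟩)
          (fun B C => g B.card (C ∩ s2).card (C ∩ rst).card)
    _ = ∑ B ∈ s1.powerset, ∑ C ∈ s2.powerset, ∑ D ∈ rst.powerset,
          g B.card C.card D.card := by
        refine Finset.sum_congr rfl fun B _ => ?_
        exact sum_powerset_disjUnion hd2r (fun C D => g B.card C.card D.card)
    _ = ∑ B ∈ s1.powerset, ∑ C ∈ s2.powerset,
          ∑ c ∈ range (n - 2*m + 1), ((n - 2*m).choose c : ℝ) * g B.card C.card c := by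
        refine Finset.sum_congr rfl fun B _ => Finset.sum_congr rfl fun C _ => ?_
        exact sum_powerset_card rst (n - 2*m) (card_rest n m h2m) _
    _ = ∑ B ∈ s1.powerset, ∑ b ∈ range (m+1), (m.choose b : ℝ) *
          ∑ c ∈ range (n - 2*m + 1), ((n - 2*m).choose c : ℝ) * g B.card b c := by
        refine Finset.sum_congr rfl fun B _ => ?_
        exact sum_powerset_card s2 m (card_fold2 n m h2m)
          (fun b => ∑ c ∈ range (n - 2*m + 1), ((n - 2*m).choose c : ℝ) * g B.card b c)
    _ = _ := sum_powerset_card s1 m (card_fold1 n m h2m)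
          (fun a => ∑ b ∈ range (m+1), (m.choose b : ℝ) *
            ∑ c ∈ range (n - 2*m + 1), ((n - 2*m).choose c : ℝ) * g a b c)


lemma ibinom_nonneg (a T c : ℕ) (h : c ≤ T) :
    ibinom a ((T:ℤ) - c) = a.choose (T - c) := by
  rw [ibinom, if_pos (by omega)]
  congr 1
  omega

lemma ibinom_neg (a : ℕ) {b : ℤ} (h : b < 0) : ibinom a b = 0 := if_neg (by omega)

lemma sum_choose_real (m : ℕ) : ∑ a ∈ range (m+1), (m.choose a : ℝ) = 2^m := by
  have := Nat.sum_range_choose m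
  have h := congrArg (Nat.cast : ℕ → ℝ) this
  push_cast at h
  exact h

lemma sum_choose_mul_id_nat (m : ℕ) :
    2 * ∑ a ∈ range (m+1), m.choose a * a = m * 2^m := by
  have h := Finset.sum_range_reflect (fun a => m.choose a * a) (m+1)
  simp only [Nat.add_sub_cancel] at h
  have h2 : ∑ j ∈ range (m+1), m.choose (m - j) * (m - j)
      = ∑ j ∈ range (m+1), m.choose j * (m - j) := by
    refine Finset.sum_congr rfl fun j hj => ?_
    rw [Nat.choose_symm (by simp at hj; omega)]
  calc 2 * ∑ a ∈ range (m+1), m.choose a * a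
      = (∑ a ∈ range (m+1), m.choose a * a) + ∑ j ∈ range (m+1), m.choose (m-j) * (m-j) := by
        rw [h]; ring
    _ = ∑ a ∈ range (m+1), (m.choose a * a + m.choose a * (m - a)) := by
        rw [h2, ← Finset.sum_add_distrib]
    _ = ∑ a ∈ range (m+1), m.choose a * m := by
        refine Finset.sum_congr rfl fun a ha => ?_
        simp only [mem_range] at ha
        have : a + (m - a) = m := by omega
        rw [← Nat.mul_add, this]
    _ = m * 2^m := by
        rw [← Finset.sum_mul, Nat.sum_range_choose]
        ring

lemma sum_choose_mul_id (m : ℕ) :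
    ∑ a ∈ range (m+1), (m.choose a : ℝ) * a = m * 2^m / 2 := by
  have h := congrArg (Nat.cast : ℕ → ℝ) (sum_choose_mul_id_nat m)
  push_cast at h
  linarith

lemma sum_choose_ind (m s : ℕ) :
    ∑ a ∈ range (m+1), (m.choose a : ℝ) * ((m:ℝ) - 2*a) * (if s ≤ a then 1 else 0)
      = -(s:ℝ) * m.choose s := by
  by_cases hs : s ≤ m
  · have step : ∀ a, a ≤ m → (m.choose a : ℝ) * ((m:ℝ) - 2*a)
        = ((a+1 : ℕ) : ℝ) * m.choose (a+1) - (a : ℝ) * m.choose a := by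
      intro a ha
      have hnat := Nat.choose_succ_right_eq m a
      have h := congrArg (Nat.cast : ℕ → ℝ) hnat
      push_cast [Nat.cast_sub ha] at h
      push_cast
      nlinarith [h]
    calc ∑ a ∈ range (m+1), (m.choose a : ℝ) * ((m:ℝ) - 2*a) * (if s ≤ a then 1 else 0)
        = ∑ a ∈ range (m+1), (if s ≤ a then (m.choose a : ℝ) * ((m:ℝ) - 2*a) else 0) := by
          refine Finset.sum_congr rfl fun a _ => ?_
          split_ifs <;> ring
      _ = ∑ a ∈ Ico s (m+1), (m.choose a : ℝ) * ((m:ℝ) - 2*a) := by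
          rw [range_eq_Ico, ← Finset.sum_Ico_consecutive _ (Nat.zero_le s) (by omega)]
          rw [Finset.sum_congr rfl (fun a (ha : a ∈ Ico 0 s) => if_neg (by simp at ha; omega)),
            Finset.sum_const, smul_zero, zero_add]
          exact Finset.sum_congr rfl fun a ha => if_pos (by simp at ha; exact ha.1)
      _ = ∑ a ∈ Ico s (m+1),
            ((fun j : ℕ => (j : ℝ) * (m.choose j : ℝ)) (a+1) - (fun j : ℕ => (j : ℝ) * (m.choose j : ℝ)) a) := by
          refine Finset.sum_congr rfl fun a ha => ?_
          simp only [mem_Ico] at ha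
          have := step a (by omega)
          push_cast at this ⊢
          linarith
      _ = -(s:ℝ) * m.choose s := by
          rw [Finset.sum_Ico_eq_sum_range]
          have : ∀ j ∈ range (m+1-s),
              ((fun j : ℕ => (j : ℝ) * (m.choose j : ℝ)) (s+j+1) - (fun j : ℕ => (j : ℝ) * (m.choose j : ℝ)) (s+j))
              = (fun i => ((s+i : ℕ) : ℝ) * m.choose (s+i)) (j+1)
                - (fun i => ((s+i : ℕ) : ℝ) * m.choose (s+i)) j := by
            intro j _
            simp only
            rw [show s + (j+1) = s + j + 1 by ring]
          rw [Finset.sum_congr rfl this, Finset.sum_range_sub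
            (fun i => ((s+i : ℕ) : ℝ) * m.choose (s+i))]
          have h1 : s + (m + 1 - s) = m + 1 := by omega
          rw [h1, Nat.choose_succ_self]
          push_cast
          ring
  · have h0 : ∀ a ∈ range (m+1), (m.choose a : ℝ) * ((m:ℝ) - 2*a) * (if s ≤ a then 1 else 0) = 0 := by
      intro a ha
      simp only [mem_range] at ha
      rw [if_neg (by omega)]
      ring
    rw [Finset.sum_congr rfl h0, Finset.sum_const, smul_zero,
      Nat.choose_eq_zero_of_lt (by omega)]
    simp

lemma s_choose_eq_ibinom (m T c : ℕ) (hm : 1 ≤ m) :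
    ((T + 1 - c : ℕ) : ℝ) * m.choose (T + 1 - c)
      = m * (ibinom (m-1) ((T:ℤ) - c) : ℝ) := by
  by_cases hc : c ≤ T
  · rw [ibinom_nonneg _ _ _ hc]
    have hd : T + 1 - c = (T - c) + 1 := by omega
    rw [hd]
    have hnat := Nat.add_one_mul_choose_eq (m-1) (T-c)
    have hm1 : m - 1 + 1 = m := by omega
    rw [hm1] at hnat
    have h := congrArg (Nat.cast : ℕ → ℝ) hnat
    push_cast at h ⊢
    linarith
  · rw [ibinom_neg _ (by omega), show T + 1 - c = 0 by omega]
    simp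

lemma sum_range_shrink (f : ℕ → ℝ) {N M : ℕ} (hNM : N ≤ M)
    (h : ∀ c, N ≤ c → f c = 0) :
    ∑ c ∈ range M, f c = ∑ c ∈ range N, f c := by
  refine (Finset.sum_subset (by simp [hNM]) fun x _ hx => ?_).symm
  exact h x (by simpa using hx)

lemma sum_range_switch (f : ℕ → ℝ) (N M : ℕ) (h1 : ∀ c, N ≤ c → f c = 0)
    (h2 : ∀ c, M ≤ c → f c = 0) :
    ∑ c ∈ range N, f c = ∑ c ∈ range M, f c := by
  rw [← sum_range_shrink f (Nat.le_max_left N M) h1,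
    sum_range_shrink f (Nat.le_max_right N M) h2]

lemma reindex_sum (r m1 T : ℕ) :
    ∑ c ∈ range (r+1), (r.choose c : ℝ) * (ibinom m1 ((T:ℤ) - c) : ℝ)^2
      = ∑ j ∈ range (m1+1), (m1.choose j : ℝ)^2 * (ibinom r ((T:ℤ) - j) : ℝ) := by
  rw [sum_range_switch _ (r+1) (T+1)
    (fun c hc => by rw [Nat.choose_eq_zero_of_lt (by omega)]; simp)
    (fun c hc => by rw [ibinom_neg _ (by omega : (T:ℤ) - c < 0)]; simp)]
  rw [sum_range_switch (fun j => (m1.choose j : ℝ)^2 * (ibinom r ((T:ℤ) - j) : ℝ))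
    (m1+1) (T+1)
    (fun c hc => by
      show (m1.choose c : ℝ)^2 * (ibinom r ((T:ℤ) - c) : ℝ) = 0
      rw [Nat.choose_eq_zero_of_lt (by omega)]; simp)
    (fun c hc => by
      show (m1.choose c : ℝ)^2 * (ibinom r ((T:ℤ) - c) : ℝ) = 0
      rw [ibinom_neg _ (by omega : (T:ℤ) - c < 0)]; simp)]
  rw [← Finset.sum_range_reflect
    (fun j => (m1.choose j : ℝ)^2 * (ibinom r ((T:ℤ) - j) : ℝ)) (T+1)]
  refine Finset.sum_congr rfl fun c hc => ?_
  simp only [mem_range] at hc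
  have hc' : c ≤ T := by omega
  rw [Nat.add_sub_cancel]
  rw [ibinom_nonneg m1 T c hc', ibinom_nonneg r T (T - c) (by omega),
    show T - (T - c) = c by omega]
  ring

noncomputable def Faux (m T : ℕ) (x y : ℕ) : ℝ :=
  if T + 1 ≤ y then ((m:ℝ) - x)/m else (x:ℝ)/m

lemma sum_wA (m T : ℕ) (hm : 1 ≤ m) (y : ℕ) :
    ∑ a ∈ range (m+1), (m.choose a : ℝ) * Faux m T a y = 2^m/2 := by
  have hm0 : (m:ℝ) ≠ 0 := by positivity
  unfold Faux
  split_ifs with h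
  · have : ∀ a ∈ range (m+1), (m.choose a : ℝ) * (((m:ℝ) - a)/m)
        = (m.choose a : ℝ) - (m.choose a : ℝ) * a / m := by
      intro a _
      field_simp
    rw [Finset.sum_congr rfl this, Finset.sum_sub_distrib, sum_choose_real]
    rw [← Finset.sum_div, sum_choose_mul_id]
    field_simp
    ring
  · have : ∀ a ∈ range (m+1), (m.choose a : ℝ) * ((a:ℝ)/m)
        = (m.choose a : ℝ) * a / m := by
      intro a _; ring
    rw [Finset.sum_congr rfl this, ← Finset.sum_div, sum_choose_mul_id]
    field_simp

lemma sum_w0 (m : ℕ) :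
    ∑ a ∈ range (m+1), (m.choose a : ℝ) * (((m:ℝ) - 2*a)/m) = 0 := by
  have h := sum_choose_ind m 0
  simp only [Nat.zero_le, if_true, mul_one, Nat.cast_zero, Nat.choose_zero_right] at h
  have : ∀ a ∈ range (m+1), (m.choose a : ℝ) * (((m:ℝ) - 2*a)/m)
      = ((m.choose a : ℝ) * ((m:ℝ) - 2*a))/m := by
    intro a _; ring
  rw [Finset.sum_congr rfl this, ← Finset.sum_div, h]
  simp

lemma sum_wC (m T c : ℕ) (hm : 1 ≤ m) :
    ∑ a ∈ range (m+1),
      (m.choose a : ℝ) * (((m:ℝ) - 2*a)/m) * (if T + 1 ≤ a + c then 1 else 0)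
      = -(ibinom (m-1) ((T:ℤ) - c) : ℝ) := by
  have hm0 : (m:ℝ) ≠ 0 := by positivity
  have hiff : ∀ a : ℕ, (T + 1 ≤ a + c) ↔ (T + 1 - c ≤ a) := by intro a; omega
  have : ∀ a ∈ range (m+1),
      (m.choose a : ℝ) * (((m:ℝ) - 2*a)/m) * (if T + 1 ≤ a + c then 1 else 0)
      = ((m.choose a : ℝ) * ((m:ℝ) - 2*a) * (if T + 1 - c ≤ a then 1 else 0))/m := by
    intro a _
    rw [if_congr (hiff a) rfl rfl]
    ring
  rw [Finset.sum_congr rfl this, ← Finset.sum_div, sum_choose_ind m (T+1-c)]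
  have := s_choose_eq_ibinom m T c hm
  field_simp
  linarith [this]

lemma inner_double (m T c : ℕ) (hm : 1 ≤ m) :
    ∑ a ∈ range (m+1), ∑ b ∈ range (m+1),
      ((m.choose a : ℝ) * (m.choose b : ℝ)) * (Faux m T a (b+c) * Faux m T b (a+c))
      = (2^m/2)^2 + ((ibinom (m-1) ((T:ℤ) - c) : ℝ))^2 := by
  have hm0 : (m:ℝ) ≠ 0 := by positivity
  set χ : ℕ → ℝ := fun y => if T + 1 ≤ y then 1 else 0 with hχ
  have hpt : ∀ a b : ℕ,
      ((m.choose a : ℝ) * (m.choose b : ℝ)) * (Faux m T a (b+c) * Faux m T b (a+c))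
      = ((m.choose a : ℝ) * ((a:ℝ)/m)) * ((m.choose b : ℝ) * ((b:ℝ)/m))
        + ((m.choose a : ℝ) * ((a:ℝ)/m) * χ (a+c)) * ((m.choose b : ℝ) * (((m:ℝ) - 2*b)/m))
        + ((m.choose a : ℝ) * (((m:ℝ) - 2*a)/m)) * ((m.choose b : ℝ) * ((b:ℝ)/m) * χ (b+c))
        + ((m.choose a : ℝ) * (((m:ℝ) - 2*a)/m) * χ (a+c))
            * ((m.choose b : ℝ) * (((m:ℝ) - 2*b)/m) * χ (b+c)) := by
    intro a b
    simp only [Faux, hχ]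
    split_ifs <;> field_simp <;> ring
  calc ∑ a ∈ range (m+1), ∑ b ∈ range (m+1),
        ((m.choose a : ℝ) * (m.choose b : ℝ)) * (Faux m T a (b+c) * Faux m T b (a+c))
      = (∑ a ∈ range (m+1), (m.choose a : ℝ) * ((a:ℝ)/m))
          * (∑ b ∈ range (m+1), (m.choose b : ℝ) * ((b:ℝ)/m))
        + (∑ a ∈ range (m+1), (m.choose a : ℝ) * ((a:ℝ)/m) * χ (a+c))
          * (∑ b ∈ range (m+1), (m.choose b : ℝ) * (((m:ℝ) - 2*b)/m))
        + (∑ a ∈ range (m+1), (m.choose a : ℝ) * (((m:ℝ) - 2*a)/m))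
          * (∑ b ∈ range (m+1), (m.choose b : ℝ) * ((b:ℝ)/m) * χ (b+c))
        + (∑ a ∈ range (m+1), (m.choose a : ℝ) * (((m:ℝ) - 2*a)/m) * χ (a+c))
          * (∑ b ∈ range (m+1), (m.choose b : ℝ) * (((m:ℝ) - 2*b)/m) * χ (b+c)) := by
        rw [Finset.sum_mul_sum, Finset.sum_mul_sum, Finset.sum_mul_sum, Finset.sum_mul_sum]
        rw [← Finset.sum_add_distrib, ← Finset.sum_add_distrib, ← Finset.sum_add_distrib]
        refine Finset.sum_congr rfl fun a _ => ?_
        rw [← Finset.sum_add_distrib, ← Finset.sum_add_distrib, ← Finset.sum_add_distrib]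
        exact Finset.sum_congr rfl fun b _ => hpt a b
      _ = (2^m/2)^2 + ((ibinom (m-1) ((T:ℤ) - c) : ℝ))^2 := by
        have hA : ∑ a ∈ range (m+1), (m.choose a : ℝ) * ((a:ℝ)/m) = 2^m/2 := by
          have : ∀ a ∈ range (m+1), (m.choose a : ℝ) * ((a:ℝ)/m)
              = (m.choose a : ℝ) * a / m := fun a _ => by ring
          rw [Finset.sum_congr rfl this, ← Finset.sum_div, sum_choose_mul_id]
          field_simp
        have hC : ∑ a ∈ range (m+1), (m.choose a : ℝ) * (((m:ℝ) - 2*a)/m) * χ (a+c)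
            = -(ibinom (m-1) ((T:ℤ) - c) : ℝ) := sum_wC m T c hm
        rw [hA, hC, sum_w0 m]
        ring

lemma triple_reorder (s t u : Finset ℕ) (P Q R : ℕ → ℝ) (g : ℕ → ℕ → ℕ → ℝ) :
    ∑ a ∈ s, P a * ∑ b ∈ t, Q b * ∑ c ∈ u, R c * g a b c
      = ∑ b ∈ t, Q b * ∑ c ∈ u, R c * ∑ a ∈ s, P a * g a b c := by
  simp only [Finset.mul_sum]
  rw [Finset.sum_comm]
  refine Finset.sum_congr rfl fun b _ => ?_
  rw [Finset.sum_comm]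
  exact Finset.sum_congr rfl fun c _ => Finset.sum_congr rfl fun a _ => by ring

lemma double_reorder (t u : Finset ℕ) (Q R : ℕ → ℝ) (g : ℕ → ℕ → ℝ) :
    ∑ b ∈ t, Q b * ∑ c ∈ u, R c * g b c = ∑ c ∈ u, R c * ∑ b ∈ t, Q b * g b c := by
  simp only [Finset.mul_sum]
  rw [Finset.sum_comm]
  exact Finset.sum_congr rfl fun c _ => Finset.sum_congr rfl fun b _ => by ring

lemma triple_reorder3 (s t u : Finset ℕ) (P Q R : ℕ → ℝ) (g : ℕ → ℕ → ℕ → ℝ) :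
    ∑ a ∈ s, P a * ∑ b ∈ t, Q b * ∑ c ∈ u, R c * g a b c
      = ∑ c ∈ u, R c * ∑ a ∈ s, P a * ∑ b ∈ t, Q b * g a b c := by
  rw [triple_reorder]
  rw [double_reorder]
  refine Finset.sum_congr rfl fun c _ => ?_
  congr 1
  rw [double_reorder]

lemma sum_choose_mul_const (N : ℕ) (K : ℝ) :
    ∑ c ∈ range (N+1), (N.choose c : ℝ) * K = 2^N * K := by
  rw [← Finset.sum_mul, sum_choose_real]

/-- **Exact combinatorial form of the fold covariance of Majority.**
In the Majority cross-validation model with `k ∣ n`, `m = n/k`,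
`Cov(L̂₁, L̂₂) = 2^{-n} · Σ_{j=0}^{m-1} binom(m-1, j)² · binom(n-2m, ⌊(n-m)/2⌋ - j)`. -/
theorem majority_fold_covariance_combinatorial
    (n k : ℕ) (hn : 2 ≤ n) (hk : 2 ≤ k) (hkn : k ∣ n) (m : ℕ) (hm : m = n / k) :
    expec n (fun ω => Lhat n m 1 ω * Lhat n m 2 ω)
        - expec n (Lhat n m 1) * expec n (Lhat n m 2)
      = (2 : ℝ)⁻¹ ^ n * ∑ j ∈ Finset.range m,
          ((m - 1).choose j : ℝ) ^ 2 *
            (ibinom (n - 2 * m) (((n : ℤ) - m) / 2 - j) : ℝ) := by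
  -- basic arithmetic facts
  have hnm : n = k * m := by rw [hm, Nat.mul_div_cancel' hkn]
  have hm1 : 1 ≤ m := by
    rcases Nat.eq_zero_or_pos m with h | h
    · rw [h, Nat.mul_zero] at hnm
      omega
    · exact h
  have h2m : 2*m ≤ n := by
    calc 2*m ≤ k*m := Nat.mul_le_mul_right m hk
    _ = n := hnm.symm
  have hmn : m ≤ n := by omega
  set T := (n - m)/2 with hT
  set r := n - 2*m with hr
  have hm0 : (m:ℝ) ≠ 0 := by positivity
  have cond : ∀ y : ℕ, (((n:ℝ) - m)/2 < (y:ℝ)) ↔ (T + 1 ≤ y) := by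
    intro y
    rw [div_lt_iff₀ (by norm_num : (0:ℝ) < 2)]
    rw [show (n:ℝ) - m = ((n - m : ℕ) : ℝ) by push_cast [hmn]; ring]
    rw [show (y:ℝ)*2 = ((y*2 : ℕ):ℝ) by push_cast; ring, Nat.cast_lt]
    omega
  set Dc : (Fin n → Bool) → ℕ :=
    fun ω => ((univ \ (cvFold n m 1 ∪ cvFold n m 2)).filter fun j => ω j = true).card with hDc
  have hd2r : Disjoint (cvFold n m 2) (univ \ (cvFold n m 1 ∪ cvFold n m 2)) :=
    Finset.disjoint_of_subset_left subset_union_right (disj_rest n m)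
  have hd1r : Disjoint (cvFold n m 1) (univ \ (cvFold n m 1 ∪ cvFold n m 2)) :=
    Finset.disjoint_of_subset_left subset_union_left (disj_rest n m)
  have hY1 : ∀ ω, Yc n m 1 ω = Xc n m 2 ω + Dc ω := by
    intro ω
    rw [Yc, compl_fold1 n m, Finset.filter_union, Finset.card_union_of_disjoint
      (Finset.disjoint_filter_filter hd2r)]
    rfl
  have hY2 : ∀ ω, Yc n m 2 ω = Xc n m 1 ω + Dc ω := by
    intro ω
    rw [Yc, compl_fold2 n m, Finset.filter_union, Finset.card_union_of_disjoint
      (Finset.disjoint_filter_filter hd1r)]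
    rfl
  have hL1 : ∀ ω, Lhat n m 1 ω = Faux m T (Xc n m 1 ω) (Xc n m 2 ω + Dc ω) := by
    intro ω
    rw [Lhat, Faux, ← hY1 ω]
    exact if_congr (cond _) rfl rfl
  have hL2 : ∀ ω, Lhat n m 2 ω = Faux m T (Xc n m 2 ω) (Xc n m 1 ω + Dc ω) := by
    intro ω
    rw [Lhat, Faux, ← hY2 ω]
    exact if_congr (cond _) rfl rfl
  -- the three sums
  have E1 : ∑ ω : Fin n → Bool, Lhat n m 1 ω = 2^m * (2^r * (2^m/2)) := by
    rw [expec_reduce n m h2m (fun a b c => Faux m T a (b+c)) (Lhat n m 1)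
      (fun ω => hL1 ω)]
    rw [triple_reorder]
    have inner : ∀ b c : ℕ, ∑ a ∈ range (m+1), (m.choose a : ℝ) * Faux m T a (b+c)
        = 2^m/2 := fun b c => sum_wA m T hm1 (b+c)
    calc ∑ b ∈ range (m+1), (m.choose b:ℝ) * ∑ c ∈ range (r+1), ((r.choose c):ℝ) *
          ∑ a ∈ range (m+1), (m.choose a : ℝ) * Faux m T a (b+c)
        = ∑ b ∈ range (m+1), (m.choose b:ℝ) * (2^r * (2^m/2)) := by
          refine Finset.sum_congr rfl fun b _ => ?_
          congr 1
          rw [Finset.sum_congr rfl (fun c _ => by rw [inner b c]), sum_choose_mul_const]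
      _ = 2^m * (2^r * (2^m/2)) := sum_choose_mul_const m _
  have E2 : ∑ ω : Fin n → Bool, Lhat n m 2 ω = 2^m * (2^r * (2^m/2)) := by
    rw [expec_reduce n m h2m (fun a b c => Faux m T b (a+c)) (Lhat n m 2)
      (fun ω => hL2 ω)]
    have step : ∀ a : ℕ, ∑ b ∈ range (m+1), (m.choose b:ℝ) * ∑ c ∈ range (r+1),
          ((r.choose c):ℝ) * Faux m T b (a+c)
        = 2^r * (2^m/2) := by
      intro a
      rw [double_reorder]
      have : ∀ c ∈ range (r+1), ((r.choose c):ℝ) *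
          (∑ b ∈ range (m+1), (m.choose b:ℝ) * Faux m T b (a+c))
          = ((r.choose c):ℝ) * (2^m/2) := by
        intro c _
        rw [sum_wA m T hm1 (a+c)]
      rw [Finset.sum_congr rfl this, sum_choose_mul_const]
    rw [Finset.sum_congr rfl (fun a _ => by rw [step a]), sum_choose_mul_const]
  have E12 : ∑ ω : Fin n → Bool, (Lhat n m 1 ω * Lhat n m 2 ω)
      = 2^r * (2^m/2)^2
        + ∑ c ∈ range (r+1), (r.choose c : ℝ) * ((ibinom (m-1) ((T:ℤ) - c) : ℝ))^2 := by
    rw [expec_reduce n m h2m (fun a b c => Faux m T a (b+c) * Faux m T b (a+c))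
      (fun ω => Lhat n m 1 ω * Lhat n m 2 ω) (fun ω => by
        show Lhat n m 1 ω * Lhat n m 2 ω = _
        rw [hL1 ω, hL2 ω])]
    rw [triple_reorder3]
    have inner : ∀ c : ℕ, ∑ a ∈ range (m+1), (m.choose a:ℝ) * ∑ b ∈ range (m+1),
          (m.choose b:ℝ) * (Faux m T a (b+c) * Faux m T b (a+c))
        = (2^m/2)^2 + ((ibinom (m-1) ((T:ℤ) - c) : ℝ))^2 := by
      intro c
      rw [← inner_double m T c hm1]
      refine Finset.sum_congr rfl fun a _ => ?_
      rw [Finset.mul_sum]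
      exact Finset.sum_congr rfl fun b _ => by ring
    calc ∑ c ∈ range (r+1), (r.choose c:ℝ) * ∑ a ∈ range (m+1), (m.choose a:ℝ) *
          ∑ b ∈ range (m+1), (m.choose b:ℝ) * (Faux m T a (b+c) * Faux m T b (a+c))
        = ∑ c ∈ range (r+1), ((r.choose c:ℝ) * (2^m/2)^2
            + (r.choose c:ℝ) * ((ibinom (m-1) ((T:ℤ) - c) : ℝ))^2) := by
          refine Finset.sum_congr rfl fun c _ => ?_
          rw [inner c]
          ring
      _ = _ := by
          rw [Finset.sum_add_distrib, sum_choose_mul_const]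
  -- final arithmetic
  have hTz : ((n : ℤ) - m)/2 = (T : ℤ) := by
    rw [show (n:ℤ) - m = ((n - m : ℕ) : ℤ) by omega, hT]
    exact (Int.natCast_ediv (n-m) 2).symm
  have hW : ∑ c ∈ range (r+1), (r.choose c : ℝ) * ((ibinom (m-1) ((T:ℤ) - c) : ℝ))^2
      = ∑ j ∈ Finset.range m, ((m - 1).choose j : ℝ) ^ 2
          * (ibinom r (((n : ℤ) - m) / 2 - j) : ℝ) := by
    have hre := reindex_sum r (m-1) T
    rw [show (m-1)+1 = m by omega] at hre
    rw [hre]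
    refine Finset.sum_congr rfl fun j _ => ?_
    rw [hTz]
  have hpow : (2:ℝ)^n = 2^m * 2^m * 2^r := by
    rw [← pow_add, ← pow_add]
    congr 1
    omega
  have h2n : (2:ℝ)^n ≠ 0 := by positivity
  rw [expec, expec, expec, E1, E2, E12, ← hW]
  rw [show ((2:ℝ)⁻¹)^n = 1/2^n by rw [inv_pow]; ring]
  have hA : (2:ℝ)^m * (2^r * (2^m/2)) = 2^n/2 := by rw [hpow]; ring
  have hB : (2:ℝ)^r * (2^m/2)^2 = 2^n/4 := by rw [hpow]; ring
  rw [hA, hB]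
  field_simp
  ring
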